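/- Let a ∈ ℝ, b > 0 and x₀ ≥ 0, and let ρ^F be the Smoluchowski fundamental solution on the half-line with these parameters. Then for all t > 0 the no-flux boundary condition holds at x = 0: a ρ^F(0,t) − b ∂_x ρ^F(0,t) = 0. -/

import Mathlib

open MeasureTheory Set

/-- The Smoluchowski fundamental solution on the half-line with drift `a`,
diffusion `b` and initial point `x₀`. -/
noncomputable def smolFund (a b x₀ : ℝ) (x t : ℝ) : ℝ :=
  (Real.sqrt (4 * Real.pi * b * t))⁻¹ * Real.exp (-(x - x₀ - a * t) ^ 2 / (4 * b * t))
  + (Real.sqrt (4 * Real.pi * b * t))⁻¹ *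
      Real.exp (-(a / b) * x₀ - (x + x₀ - a * t) ^ 2 / (4 * b * t))
  - a / (2 * b) * Real.exp ((a / b) * x) *
      ((2 / Real.sqrt Real.pi) *
        ∫ y in Ioi ((x + x₀ + a * t) / Real.sqrt (4 * b * t)), Real.exp (-y ^ 2))

lemma gauss_integrable : Integrable (fun y : ℝ => Real.exp (-y ^ 2)) := by
  have := integrable_exp_neg_mul_sq (b := (1:ℝ)) one_pos
  simpa using this

lemma hasDerivAt_tail (u : ℝ) :
    HasDerivAt (fun v : ℝ => ∫ y in Ioi v, Real.exp (-y ^ 2)) (-Real.exp (-u ^ 2)) u := by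
  have hint := gauss_integrable
  have hcont : Continuous fun y : ℝ => Real.exp (-y ^ 2) := by continuity
  have key : ∀ v : ℝ, (∫ y in Ioi v, Real.exp (-y ^ 2)) =
      ((∫ y : ℝ, Real.exp (-y ^ 2)) - ∫ y in Iic (0:ℝ), Real.exp (-y ^ 2))
        - ∫ y in (0:ℝ)..v, Real.exp (-y ^ 2) := by
    intro v
    have h1 := intervalIntegral.integral_Iic_add_Ioi (b := v) (μ := volume)
      hint.integrableOn hint.integrableOn
    have h2 := intervalIntegral.integral_Iic_sub_Iic (a := (0:ℝ)) (b := v) (μ := volume)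
      hint.integrableOn hint.integrableOn
    linarith [h1, h2]
  have hd : HasDerivAt (fun v : ℝ => ∫ y in (0:ℝ)..v, Real.exp (-y ^ 2))
      (Real.exp (-u ^ 2)) u :=
    intervalIntegral.integral_hasDerivAt_right
      hint.intervalIntegrable
      hcont.aestronglyMeasurable.stronglyMeasurableAtFilter
      hcont.continuousAt
  have h := hd.const_sub ((∫ y : ℝ, Real.exp (-y ^ 2)) - ∫ y in Iic (0:ℝ), Real.exp (-y ^ 2))
  have heq : (fun v : ℝ => ∫ y in Ioi v, Real.exp (-y ^ 2)) =
      fun v : ℝ => ((∫ y : ℝ, Real.exp (-y ^ 2)) - ∫ y in Iic (0:ℝ), Real.exp (-y ^ 2))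
        - ∫ y in (0:ℝ)..v, Real.exp (-y ^ 2) := funext key
  rw [heq]
  exact h

lemma hasDerivAt_smol (a b x₀ t x : ℝ) :
    HasDerivAt (fun ξ => smolFund a b x₀ ξ t)
      ((Real.sqrt (4 * Real.pi * b * t))⁻¹ *
          (Real.exp (-(x - x₀ - a * t) ^ 2 / (4 * b * t)) * (-(2 * (x - x₀ - a * t)) / (4 * b * t)))
        + (Real.sqrt (4 * Real.pi * b * t))⁻¹ *
          (Real.exp (-(a / b) * x₀ - (x + x₀ - a * t) ^ 2 / (4 * b * t)) *
            (-(2 * (x + x₀ - a * t)) / (4 * b * t)))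
        - ((a / (2 * b) * (Real.exp ((a / b) * x) * (a / b))) *
            ((2 / Real.sqrt Real.pi) *
              ∫ y in Ioi ((x + x₀ + a * t) / Real.sqrt (4 * b * t)), Real.exp (-y ^ 2))
          + (a / (2 * b) * Real.exp ((a / b) * x)) *
            ((2 / Real.sqrt Real.pi) *
              (-Real.exp (-((x + x₀ + a * t) / Real.sqrt (4 * b * t)) ^ 2) *
                (Real.sqrt (4 * b * t))⁻¹)))) x := by
  have h1g : HasDerivAt (fun ξ : ℝ => -(ξ - x₀ - a * t) ^ 2 / (4 * b * t))
      (-(2 * (x - x₀ - a * t)) / (4 * b * t)) x := by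
    have hlin : HasDerivAt (fun ξ : ℝ => ξ - x₀ - a * t) 1 x :=
      ((hasDerivAt_id x).sub_const x₀).sub_const (a * t)
    have := ((hlin.pow 2).neg).div_const (4 * b * t)
    refine this.congr_deriv ?_
    push_cast
    ring
  have h1 := (h1g.exp).const_mul (Real.sqrt (4 * Real.pi * b * t))⁻¹
  have h2g : HasDerivAt (fun ξ : ℝ => -(a / b) * x₀ - (ξ + x₀ - a * t) ^ 2 / (4 * b * t))
      (-(2 * (x + x₀ - a * t)) / (4 * b * t)) x := by
    have hlin : HasDerivAt (fun ξ : ℝ => ξ + x₀ - a * t) 1 x :=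
      ((hasDerivAt_id x).add_const x₀).sub_const (a * t)
    have := (((hlin.pow 2)).div_const (4 * b * t)).const_sub (-(a / b) * x₀)
    refine this.congr_deriv ?_
    push_cast
    ring
  have h2 := (h2g.exp).const_mul (Real.sqrt (4 * Real.pi * b * t))⁻¹
  have hu : HasDerivAt (fun ξ : ℝ => (ξ + x₀ + a * t) / Real.sqrt (4 * b * t))
      (Real.sqrt (4 * b * t))⁻¹ x := by
    have := (((hasDerivAt_id x).add_const x₀).add_const (a * t)).div_const (Real.sqrt (4 * b * t))
    simpa using this
  have hJ : HasDerivAt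
      (fun ξ : ℝ => ∫ y in Ioi ((ξ + x₀ + a * t) / Real.sqrt (4 * b * t)), Real.exp (-y ^ 2))
      (-Real.exp (-((x + x₀ + a * t) / Real.sqrt (4 * b * t)) ^ 2) * (Real.sqrt (4 * b * t))⁻¹)
      x := (hasDerivAt_tail _).comp x hu
  have hB := hJ.const_mul (2 / Real.sqrt Real.pi)
  have hE : HasDerivAt (fun ξ : ℝ => a / (2 * b) * Real.exp ((a / b) * ξ))
      (a / (2 * b) * (Real.exp ((a / b) * x) * (a / b))) x := by
    have : HasDerivAt (fun ξ : ℝ => (a / b) * ξ) (a / b) x := by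
      simpa using (hasDerivAt_id x).const_mul (a / b)
    exact (this.exp).const_mul _
  have h3 := hE.mul hB
  have := (h1.add h2).sub h3
  simp only [smolFund]
  exact this

/-- The Smoluchowski fundamental solution satisfies the no-flux boundary
condition `a ρ^F(0,t) − b ∂_x ρ^F(0,t) = 0` for all `t > 0`. -/
theorem stmt_7 (a b x₀ : ℝ) (hb : 0 < b) (hx₀ : 0 ≤ x₀) :
    ∀ t > (0:ℝ),
      a * smolFund a b x₀ 0 t - b * deriv (fun ξ => smolFund a b x₀ ξ t) 0 = 0 := by
  intro t ht
  rw [(hasDerivAt_smol a b x₀ t 0).deriv]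
  simp only [smolFund]
  have hbt : (0:ℝ) < 4 * b * t := by positivity
  have hs0 : 0 < Real.sqrt (4 * b * t) := Real.sqrt_pos.mpr hbt
  have hs : Real.sqrt (4 * b * t) ^ 2 = 4 * b * t := Real.sq_sqrt hbt.le
  have hπ : 0 < Real.sqrt Real.pi := Real.sqrt_pos.mpr Real.pi_pos
  have hc : Real.sqrt (4 * Real.pi * b * t) = Real.sqrt Real.pi * Real.sqrt (4 * b * t) := by
    rw [← Real.sqrt_mul Real.pi_pos.le]
    congr 1
    ring
  have e1 : Real.exp (-(0 - x₀ - a * t) ^ 2 / (4 * b * t)) =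
      Real.exp (-(x₀ + a * t) ^ 2 / (4 * b * t)) := by congr 1; ring
  have e2 : Real.exp (-(a / b) * x₀ - (0 + x₀ - a * t) ^ 2 / (4 * b * t)) =
      Real.exp (-(x₀ + a * t) ^ 2 / (4 * b * t)) := by
    congr 1
    field_simp
    ring
  have e3 : Real.exp (-((0 + x₀ + a * t) / Real.sqrt (4 * b * t)) ^ 2) =
      Real.exp (-(x₀ + a * t) ^ 2 / (4 * b * t)) := by
    congr 1
    rw [div_pow, hs]
    ring
  rw [e1, e2, e3, hc]
  simp only [mul_zero, Real.exp_zero]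
  field_simp
  ring
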